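/- Let G be a simple graph on a finite vertex set V and let k, u : V → ℕ satisfy k(v) ≤ u(N[v]) for all v ∈ V. Define ũ : V → ℕ by ũ(v) = min{u(v), max{k(w) : w ∈ N[v]}}. Then γ_{k,u}(G) = γ_{k,ũ}(G); in particular there exists a (k,u)-dominating function f of G with f(V) = γ_{k,u}(G) and f(v) ≤ max{k(w) : w ∈ N[v]} for all v ∈ V. -/
import Mathlib


open Classical Finset

/-- The closed neighborhood `N[v]` of `v` in `G`, as a finset. -/
noncomputable def closedNbhd {V : Type*} [Fintype V] (G : SimpleGraph V) (v : V) : Finset V :=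
  Finset.univ.filter (fun w => G.Adj v w ∨ w = v)

lemma mem_closedNbhd_self {V : Type*} [Fintype V] (G : SimpleGraph V) (v : V) :
    v ∈ closedNbhd G v := by simp [closedNbhd]

/-- `f` is a `(k,u)`-dominating function of `G`. -/
def IsDomFn {V : Type*} [Fintype V] (G : SimpleGraph V) (k u f : V → ℕ) : Prop :=
  ∀ v, f v ≤ u v ∧ k v ≤ ∑ w ∈ closedNbhd G v, f w

/-- `f` is a `(k,u)`-packing function of `G`. -/
def IsPackFn {V : Type*} [Fintype V] (G : SimpleGraph V) (k u f : V → ℕ) : Prop :=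
  ∀ v, f v ≤ u v ∧ ∑ w ∈ closedNbhd G v, f w ≤ k v

/-- `γ_{k,u}(G)`: minimum weight of a `(k,u)`-dominating function. -/
noncomputable def gammaKU {V : Type*} [Fintype V] (G : SimpleGraph V) (k u : V → ℕ) : ℕ :=
  sInf {s | ∃ f, IsDomFn G k u f ∧ s = ∑ v, f v}

/-- `L_{k,u}(G)`: maximum weight of a `(k,u)`-packing function. -/
noncomputable def LKU {V : Type*} [Fintype V] (G : SimpleGraph V) (k u : V → ℕ) : ℕ :=
  sSup {s | ∃ f, IsPackFn G k u f ∧ s = ∑ v, f v}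

lemma mem_closedNbhd_comm {V : Type*} [Fintype V] (G : SimpleGraph V) {v w : V} :
    w ∈ closedNbhd G v ↔ v ∈ closedNbhd G w := by
  simp only [closedNbhd, Finset.mem_filter, Finset.mem_univ, true_and]
  constructor
  · rintro (h | rfl)
    · exact Or.inl h.symm
    · exact Or.inr rfl
  · rintro (h | rfl)
    · exact Or.inl h.symm
    · exact Or.inr rfl

theorem stmt_7 {V : Type*} [Fintype V] (G : SimpleGraph V) (k u : V → ℕ)
    (hk : ∀ v, k v ≤ ∑ w ∈ closedNbhd G v, u w) :
    gammaKU G k u = gammaKU G k (fun v => min (u v) ((closedNbhd G v).sup k)) ∧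
      ∃ f, IsDomFn G k u f ∧ (∑ v, f v) = gammaKU G k u ∧
        ∀ v, f v ≤ (closedNbhd G v).sup k := by
  set S : Set ℕ := {s | ∃ f, IsDomFn G k u f ∧ s = ∑ v, f v} with hS
  have hne : S.Nonempty := ⟨∑ v, u v, u, fun v => ⟨le_rfl, hk v⟩, rfl⟩
  have hmem : gammaKU G k u ∈ S := Nat.sInf_mem hne
  obtain ⟨f, hf, hfs⟩ := hmem
  -- every minimum-weight dominating function satisfies the bound
  have hbound : ∀ v, f v ≤ (closedNbhd G v).sup k := by
    intro v
    by_contra hv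
    push_neg at hv
    have hfv1 : 1 ≤ f v := Nat.one_le_iff_ne_zero.mpr (by omega)
    set f' : V → ℕ := Function.update f v (f v - 1) with hf'
    have hdom' : IsDomFn G k u f' := by
      intro w
      constructor
      · by_cases hwv : w = v
        · subst hwv
          simp only [hf', Function.update_self]
          exact le_trans (Nat.sub_le _ _) (hf w).1
        · simp only [hf', Function.update_of_ne hwv]
          exact (hf w).1
      · by_cases hvw : v ∈ closedNbhd G w
        · -- sum decreases by exactly 1, but is still large
          have hsum : ∑ x ∈ closedNbhd G w, f' x
              = (∑ x ∈ closedNbhd G w, f x) - 1 := by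
            rw [hf', Finset.sum_update_of_mem hvw,
              ← Finset.add_sum_erase _ f hvw, Finset.sdiff_singleton_eq_erase]
            omega
          have hfle : f v ≤ ∑ x ∈ closedNbhd G w, f x :=
            Finset.single_le_sum (fun i _ => Nat.zero_le (f i)) hvw
          have hkw : k w ≤ (closedNbhd G v).sup k :=
            Finset.le_sup (mem_closedNbhd_comm G |>.mpr hvw)
          omega
        · have hsum : ∑ x ∈ closedNbhd G w, f' x = ∑ x ∈ closedNbhd G w, f x :=
            Finset.sum_congr rfl (fun x hx => by
              rw [hf', Function.update_of_ne]
              rintro rfl; exact hvw hx)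
          rw [hsum]; exact (hf w).2
    have hsum' : ∑ x, f' x = (∑ x, f x) - 1 := by
      rw [hf', Finset.sum_update_of_mem (Finset.mem_univ v),
        ← Finset.add_sum_erase _ f (Finset.mem_univ v), Finset.sdiff_singleton_eq_erase]
      omega
    have hle : gammaKU G k u ≤ ∑ x, f' x := Nat.sInf_le ⟨f', hdom', rfl⟩
    have hpos : 1 ≤ ∑ x, f x :=
      le_trans hfv1 (Finset.single_le_sum (fun i _ => Nat.zero_le (f i)) (Finset.mem_univ v))
    omega
  -- f is a (k,ũ)-dominating function
  have hdomt : IsDomFn G k (fun v => min (u v) ((closedNbhd G v).sup k)) f :=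
    fun v => ⟨le_min (hf v).1 (hbound v), (hf v).2⟩
  have h1 : gammaKU G k (fun v => min (u v) ((closedNbhd G v).sup k)) ≤ gammaKU G k u := by
    rw [hfs]; exact Nat.sInf_le ⟨f, hdomt, rfl⟩
  have h2 : gammaKU G k u ≤ gammaKU G k (fun v => min (u v) ((closedNbhd G v).sup k)) := by
    have hmem2 : gammaKU G k (fun v => min (u v) ((closedNbhd G v).sup k)) ∈
        {s | ∃ g, IsDomFn G k (fun v => min (u v) ((closedNbhd G v).sup k)) g ∧ s = ∑ v, g v} :=
      Nat.sInf_mem ⟨∑ v, f v, f, hdomt, rfl⟩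
    obtain ⟨g, hg, hgs⟩ := hmem2
    have : IsDomFn G k u g := fun v => ⟨le_trans (hg v).1 (min_le_left _ _), (hg v).2⟩
    rw [hgs]; exact Nat.sInf_le ⟨g, this, rfl⟩
  exact ⟨le_antisymm h2 h1, f, hf, hfs.symm, hbound⟩
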